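/- Suppose E, x*, δ, M, μ, L satisfy Assumption (A) with index k (1 ≤ k ≤ d), let κ = L/μ, let α ∈ [0,1] satisfy 1 − α > κ·α·(α+5), and set η = 1 − α − κα(α+5) > 0, r̂ = 2μη/M, β = 2/(L(1−α²) + μ(1−α)). Let (x^{(n)})_{n≥0} ⊂ ℝ^d be a sequence such that for each n there exist a matrix V_k^{(n)} ∈ ℝ^{d×k} whose columns are orthonormal eigenvectors of ∇²E(x^{(n)}) corresponding to its k smallest eigenvalues and a matrix V̂_k^{(n)} ∈ ℝ^{d×k} consisting of the first k columns of a d×d orthogonal matrix with ‖V_k^{(n)}·(V_k^{(n)})ᵀ − V̂_k^{(n)}·(V̂_k^{(n)})ᵀ‖₂ ≤ α, and x^{(n+1)} = x^{(n)} − β·(I − 2·V̂_k^{(n)}·(V̂_k^{(n)})ᵀ)·∇E(x^{(n)}). If r₀ = ‖x^{(0)} − x*‖₂ < min{δ, r̂}, then for all n ≥ 0, ‖x^{(n)} − x*‖₂ ≤ (1 − 2η/(κ(1−α²) + 1 − α + 2η))^n · (r̂·r₀)/(r̂ − r₀); in particular x^{(n)} converges to x* as n → ∞. -/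

import Mathlib

open Matrix Finset Filter

noncomputable section

abbrev EVec (d : ℕ) := EuclideanSpace ℝ (Fin d)

/-- The operator (spectral) norm of a real matrix, i.e. the norm of the induced
linear map between Euclidean spaces. -/
noncomputable def specNorm {m n : Type*} [Fintype m] [Fintype n] [DecidableEq n]
    (A : Matrix m n ℝ) : ℝ :=
  ‖LinearMap.toContinuousLinearMap (Matrix.toEuclideanLin A)‖

/-- Matrix-vector multiplication on Euclidean space. -/
noncomputable def mulVecE {d : ℕ} (A : Matrix (Fin d) (Fin d) ℝ) (x : EVec d) : EVec d :=
  Matrix.toEuclideanLin A x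

/-- Outer product `v · wᵀ` of two vectors. -/
def outer {d : ℕ} (v w : EVec d) : Matrix (Fin d) (Fin d) ℝ :=
  Matrix.of fun i j => v i * w j

/-- Assumption (A) with index `k` for the energy `E` with Hessian `hess`, saddle point
`xstar`, radius `δ`, Lipschitz constant `M` and eigenvalue bounds `0 < μ < L`:
`E` is twice continuously differentiable, `hess` is the (symmetric) Hessian of `E`,
`∇E(x*) = 0`, the Hessian is `M`-Lipschitz on `U(x*, δ)`, and for every
`x ∈ U(x*, δ)` the eigenvalues `λ₁ ≤ … ≤ λ_d` of `∇²E(x)` satisfy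
`λ₁ ≤ … ≤ λ_k < 0 < λ_{k+1} ≤ … ≤ λ_d` and `μ ≤ |λᵢ| ≤ L`. -/
def AssumptionA {d : ℕ} (k : ℕ) (E : EVec d → ℝ)
    (hess : EVec d → Matrix (Fin d) (Fin d) ℝ)
    (xstar : EVec d) (δ M μ L : ℝ) : Prop :=
  ContDiff ℝ 2 E ∧
  (∀ y, HasFDerivAt (gradient E)
    (LinearMap.toContinuousLinearMap (Matrix.toEuclideanLin (hess y))) y) ∧
  (∀ y, (hess y).IsSymm) ∧
  gradient E xstar = 0 ∧
  0 < δ ∧ 0 < M ∧ 0 < μ ∧ μ < L ∧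
  (∀ x y : EVec d, ‖x - xstar‖ < δ → ‖y - xstar‖ < δ →
    specNorm (hess x - hess y) ≤ M * ‖x - y‖) ∧
  (∀ x : EVec d, ‖x - xstar‖ < δ →
    ∃ (u : Fin d → EVec d) (lam : Fin d → ℝ),
      (∀ i j, (inner ℝ (u i) (u j) : ℝ) = if i = j then 1 else 0) ∧
      (∀ i, mulVecE (hess x) (u i) = lam i • u i) ∧
      Monotone lam ∧
      (∀ i : Fin d, (i : ℕ) < k → lam i < 0) ∧
      (∀ i : Fin d, k ≤ (i : ℕ) → 0 < lam i) ∧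
      (∀ i, μ ≤ |lam i| ∧ |lam i| ≤ L))

open scoped RealInnerProductSpace

section helpers
variable {m n l : Type*} [Fintype m] [Fintype n] [Fintype l] [DecidableEq n] [DecidableEq l] [DecidableEq m]

lemma toEL_le (A : Matrix m n ℝ) (v : EuclideanSpace ℝ n) :
    ‖Matrix.toEuclideanLin A v‖ ≤ specNorm A * ‖v‖ := by
  have := (LinearMap.toContinuousLinearMap (Matrix.toEuclideanLin A)).le_opNorm v
  simpa [specNorm] using this

lemma toEL_mul (A : Matrix l m ℝ) (B : Matrix m n ℝ) (v : EuclideanSpace ℝ n) :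
    Matrix.toEuclideanLin (A * B) v = Matrix.toEuclideanLin A (Matrix.toEuclideanLin B v) := by
  simp [Matrix.toEuclideanLin_apply, Matrix.mulVec_mulVec]

lemma toEL_one (v : EuclideanSpace ℝ n) : Matrix.toEuclideanLin (1 : Matrix n n ℝ) v = v := by
  simp [Matrix.toEuclideanLin_apply]

lemma inner_toEL (A : Matrix m n ℝ) (x : EuclideanSpace ℝ n) (y : EuclideanSpace ℝ m) :
    ⟪Matrix.toEuclideanLin A x, y⟫ = ⟪x, Matrix.toEuclideanLin Aᵀ y⟫ := by
  have h : Aᵀ = Aᴴ := by ext i j; simp [Matrix.conjTranspose_apply]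
  rw [h, Matrix.toEuclideanLin_conjTranspose_eq_adjoint]
  exact (LinearMap.adjoint_inner_right _ _ _).symm

lemma norm_toEL_orth {d : ℕ} (A : Matrix (Fin d) (Fin d) ℝ) (h : Aᵀ * A = 1) (w : EVec d) :
    ‖Matrix.toEuclideanLin A w‖ = ‖w‖ := by
  have h2 : ‖Matrix.toEuclideanLin A w‖ ^ 2 = ‖w‖ ^ 2 := by
    rw [← real_inner_self_eq_norm_sq, ← real_inner_self_eq_norm_sq, inner_toEL,
      ← toEL_mul, h, toEL_one]
  nlinarith [norm_nonneg (Matrix.toEuclideanLin A w), norm_nonneg w]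

lemma euclid_comp {k : ℕ} (y : EuclideanSpace ℝ (Fin k)) (j : Fin k) :
    y j = ⟪EuclideanSpace.single j (1:ℝ), y⟫ := by
  simp [EuclideanSpace.inner_single_left]

end helpers
section spectral
variable {d k : ℕ}

lemma euclid_expand {k : ℕ} (y : EuclideanSpace ℝ (Fin k)) :
    y = ∑ j, y j • EuclideanSpace.single j (1:ℝ) := by
  apply (EuclideanSpace.basisFun (Fin k) ℝ).toBasis.ext_elem
  intro j
  classical
  simp [EuclideanSpace.single_apply]

/-- Bound on operator with known orthonormal eigenbasis. -/
lemma opbound (A : Matrix (Fin d) (Fin d) ℝ) (b : OrthonormalBasis (Fin d) ℝ (EVec d))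
    (g : Fin d → ℝ) (hAb : ∀ i, Matrix.toEuclideanLin A (b i) = g i • b i) {c : ℝ} (hc : 0 ≤ c)
    (hgc : ∀ i, |g i| ≤ c) (w : EVec d) : ‖Matrix.toEuclideanLin A w‖ ≤ c * ‖w‖ := by
  classical
  have hw : w = ∑ i, ⟪b i, w⟫ • b i := (b.sum_repr' w).symm
  have hAw : Matrix.toEuclideanLin A w = ∑ i, (g i * ⟪b i, w⟫) • b i := by
    conv_lhs => rw [hw]
    rw [map_sum]
    refine Finset.sum_congr rfl fun i _ => ?_
    rw [_root_.map_smul, hAb i, smul_smul, mul_comm]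
  have hb := b.orthonormal
  have h1 : ‖Matrix.toEuclideanLin A w‖ ^ 2 = ∑ i, (g i * ⟪b i, w⟫) ^ 2 := by
    rw [← real_inner_self_eq_norm_sq, hAw]
    rw [hb.inner_sum]
    simp [sq]
  have h2 : ‖w‖ ^ 2 = ∑ i, ⟪b i, w⟫ ^ 2 := by
    conv_lhs => rw [← real_inner_self_eq_norm_sq]
    nth_rw 1 [hw]; nth_rw 2 [hw]
    rw [hb.inner_sum]
    simp [sq]
  have hsum : ∑ i, (g i * ⟪b i, w⟫) ^ 2 ≤ c ^ 2 * ∑ i, ⟪b i, w⟫ ^ 2 := by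
    rw [Finset.mul_sum]
    refine Finset.sum_le_sum fun i _ => ?_
    have hg2 : g i ^ 2 ≤ c ^ 2 := sq_le_sq' (abs_le.1 (hgc i)).1 (abs_le.1 (hgc i)).2
    nlinarith [sq_nonneg (⟪b i, w⟫)]
  have : ‖Matrix.toEuclideanLin A w‖ ^ 2 ≤ (c * ‖w‖) ^ 2 := by
    rw [h1, mul_pow, h2]; exact hsum
  nlinarith [norm_nonneg (Matrix.toEuclideanLin A w), norm_nonneg w, mul_nonneg hc (norm_nonneg w)]

end spectral

section proj
variable {d k : ℕ}

lemma sum_fin_lt {β : Type*} [AddCommMonoid β] (hkd : k ≤ d) (F : Fin d → β)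
    (h0 : ∀ i : Fin d, k ≤ (i : ℕ) → F i = 0) :
    ∑ i, F i = ∑ a : Fin k, F (Fin.castLE hkd a) := by
  classical
  have himg : ∑ i ∈ (Finset.univ.image (Fin.castLE hkd)), F i
      = ∑ a : Fin k, F (Fin.castLE hkd a) :=
    Finset.sum_image (fun a _ b _ h => Fin.castLE_injective hkd h)
  rw [← himg]
  refine (Finset.sum_subset (Finset.subset_univ _) ?_).symm
  intro i _ hi
  apply h0
  by_contra hlt
  push_neg at hlt
  exact hi (Finset.mem_image.2 ⟨⟨(i:ℕ), hlt⟩, Finset.mem_univ _, by ext; simp⟩)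

lemma proj_eig (hkd : k ≤ d)
    (H : Matrix (Fin d) (Fin d) ℝ) (hH : H.IsSymm)
    (u : Fin d → EVec d) (b : OrthonormalBasis (Fin d) ℝ (EVec d)) (hb : ⇑b = u)
    (lamu : Fin d → ℝ) (hHu : ∀ i, Matrix.toEuclideanLin H (u i) = lamu i • u i)
    (hpos : ∀ i : Fin d, k ≤ (i : ℕ) → 0 < lamu i)
    (V : Matrix (Fin d) (Fin k) ℝ) (hV : Vᵀ * V = 1)
    (lam : Fin k → ℝ) (hlam : ∀ j, lam j < 0)
    (hHV : H * V = V * Matrix.diagonal lam) :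
    ∀ i : Fin d, Matrix.toEuclideanLin (V * Vᵀ) (u i) =
      if (i : ℕ) < k then u i else 0 := by
  classical
  have hu : Orthonormal ℝ u := hb ▸ b.orthonormal
  set f : EuclideanSpace ℝ (Fin k) →ₗ[ℝ] EVec d := Matrix.toEuclideanLin V with hf
  have hfTf : ∀ y, Matrix.toEuclideanLin Vᵀ (f y) = y := by
    intro y; rw [hf, ← toEL_mul, hV, toEL_one]
  set vcol : Fin k → EVec d := fun j => f (EuclideanSpace.single j 1) with hvcol
  -- H vcol j = lam j • vcol j
  have hdiag : ∀ j : Fin k, Matrix.toEuclideanLin (Matrix.diagonal lam)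
      (EuclideanSpace.single j (1:ℝ)) = lam j • EuclideanSpace.single j (1:ℝ) := by
    intro j
    apply (EuclideanSpace.basisFun (Fin k) ℝ).toBasis.ext_elem
    intro l
    simp [Matrix.toEuclideanLin_apply, Matrix.mulVec, Matrix.diagonal, dotProduct,
      EuclideanSpace.single_apply, Finset.mul_sum, mul_ite, Finset.sum_ite_eq',
      Finset.sum_ite_eq]
    by_cases h : l = j <;> simp [h]
  have hHv : ∀ j, Matrix.toEuclideanLin H (vcol j) = lam j • vcol j := by
    intro j
    rw [hvcol, hf, ← toEL_mul, hHV, toEL_mul, hdiag, _root_.map_smul]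
  -- inner products with u i vanish for i ≥ k
  have hsymm : ∀ (x y : EVec d), ⟪Matrix.toEuclideanLin H x, y⟫ = ⟪x, Matrix.toEuclideanLin H y⟫ := by
    intro x y; rw [inner_toEL, hH.eq]
  have horth : ∀ (j : Fin k) (i : Fin d), k ≤ (i : ℕ) → ⟪vcol j, u i⟫ = 0 := by
    intro j i hik
    have h1 : lam j * ⟪vcol j, u i⟫ = lamu i * ⟪vcol j, u i⟫ := by
      have e1 : ⟪Matrix.toEuclideanLin H (vcol j), u i⟫ = lam j * ⟪vcol j, u i⟫ := by
        rw [hHv]; exact real_inner_smul_left _ _ _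
      have e2 : ⟪Matrix.toEuclideanLin H (vcol j), u i⟫ = lamu i * ⟪vcol j, u i⟫ := by
        rw [hsymm, hHu, real_inner_smul_right]
      linarith [e1, e2]
    have := hpos i hik
    have := hlam j
    rcases mul_eq_mul_right_iff.1 h1 with h | h
    · linarith
    · exact h
  -- expansion of vcol in the first k basis vectors
  set c : Fin k → Fin k → ℝ := fun a j => ⟪u (Fin.castLE hkd a), vcol j⟫ with hc
  have hvexp : ∀ j, vcol j = ∑ a : Fin k, c a j • u (Fin.castLE hkd a) := by
    intro j
    have h1 : vcol j = ∑ i : Fin d, ⟪u i, vcol j⟫ • u i := by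
      rw [← hb]; exact (b.sum_repr' _).symm
    rw [h1]
    exact sum_fin_lt hkd _ (fun i hik => by
      rw [real_inner_comm, horth j i hik, zero_smul])
  -- orthonormality of vcol
  have hvv : ∀ j j', ⟪vcol j, vcol j'⟫ = if j = j' then 1 else 0 := by
    intro j j'
    have : ⟪vcol j, vcol j'⟫ = ⟪EuclideanSpace.single j (1:ℝ), EuclideanSpace.single j' (1:ℝ)⟫ := by
      rw [hvcol, hf, inner_toEL, hfTf]
    rw [this, EuclideanSpace.inner_single_left]
    simp [EuclideanSpace.single_apply, eq_comm]
  -- B Bᵀ = 1 where B = c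
  have hucomp : Orthonormal ℝ (u ∘ Fin.castLE hkd) := hu.comp _ (Fin.castLE_injective hkd)
  have hBTB : ∀ j j', ∑ a : Fin k, c a j * c a j' = if j = j' then 1 else 0 := by
    intro j j'
    have := hvv j j'
    rw [hvexp j, hvexp j'] at this
    rw [← this]
    rw [show (∑ a : Fin k, c a j • u (Fin.castLE hkd a)) = ∑ a : Fin k, c a j • (u ∘ Fin.castLE hkd) a from rfl,
      show (∑ a : Fin k, c a j' • u (Fin.castLE hkd a)) = ∑ a : Fin k, c a j' • (u ∘ Fin.castLE hkd) a from rfl,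
      hucomp.inner_sum]
    simp
  have hBBT : ∀ a a' : Fin k, ∑ j : Fin k, c a j * c a' j = if a = a' then 1 else 0 := by
    have h1 : (Matrix.of c)ᵀ * Matrix.of c = 1 := by
      ext j j'
      simp only [Matrix.mul_apply, Matrix.transpose_apply, Matrix.of_apply]
      rw [hBTB j j']
      simp [Matrix.one_apply]
    have h2 : Matrix.of c * (Matrix.of c)ᵀ = 1 := mul_eq_one_comm.1 h1
    intro a a'
    have := congrFun (congrFun h2 a) a'
    simp only [Matrix.mul_apply, Matrix.transpose_apply, Matrix.of_apply, Matrix.one_apply] at this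
    rw [this]
  -- components of fT (u i)
  have hPu : ∀ i : Fin d, Matrix.toEuclideanLin (V * Vᵀ) (u i)
      = ∑ j : Fin k, ⟪vcol j, u i⟫ • vcol j := by
    intro i
    rw [toEL_mul]
    have hexp : Matrix.toEuclideanLin Vᵀ (u i)
        = ∑ j : Fin k, ⟪vcol j, u i⟫ • EuclideanSpace.single j (1:ℝ) := by
      rw [euclid_expand (Matrix.toEuclideanLin Vᵀ (u i))]
      refine Finset.sum_congr rfl fun j _ => ?_
      congr 1
      exact (euclid_comp _ j).trans (inner_toEL V (EuclideanSpace.single j 1) (u i)).symm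
    rw [hexp, map_sum]
    refine Finset.sum_congr rfl fun j _ => ?_
    rw [_root_.map_smul]
  intro i
  by_cases hik : (i : ℕ) < k
  · rw [hPu i, if_pos hik]
    have hcast : Fin.castLE hkd ⟨(i:ℕ), hik⟩ = i := by ext; rfl
    have hcj : ∀ j, ⟪vcol j, u i⟫ = c ⟨(i:ℕ), hik⟩ j := by
      intro j; rw [hc]; simp only [hcast]; exact real_inner_comm _ _
    calc ∑ j : Fin k, ⟪vcol j, u i⟫ • vcol j
        = ∑ j : Fin k, ∑ a : Fin k, (c ⟨(i:ℕ), hik⟩ j * c a j) • u (Fin.castLE hkd a) := by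
          refine Finset.sum_congr rfl fun j _ => ?_
          rw [hcj j, hvexp j, Finset.smul_sum]
          refine Finset.sum_congr rfl fun a _ => ?_
          rw [smul_smul]
      _ = ∑ a : Fin k, (∑ j : Fin k, c ⟨(i:ℕ), hik⟩ j * c a j) • u (Fin.castLE hkd a) := by
          rw [Finset.sum_comm]
          refine Finset.sum_congr rfl fun a _ => ?_
          rw [Finset.sum_smul]
      _ = u i := by
          rw [Finset.sum_congr rfl (fun a _ => by rw [hBBT])]
          simp [hcast]
  · rw [hPu i, if_neg hik]
    push_neg at hik
    refine Finset.sum_eq_zero fun j _ => ?_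
    rw [horth j i hik, zero_smul]

end proj

section taylor
variable {d : ℕ}

lemma toEL_subM {m n : Type*} [Fintype m] [Fintype n] [DecidableEq n]
    (A B : Matrix m n ℝ) (v : EuclideanSpace ℝ n) :
    Matrix.toEuclideanLin (A - B) v = Matrix.toEuclideanLin A v - Matrix.toEuclideanLin B v := by
  rw [map_sub]; rfl

lemma toEL_smulM {m n : Type*} [Fintype m] [Fintype n] [DecidableEq n]
    (c : ℝ) (A : Matrix m n ℝ) (v : EuclideanSpace ℝ n) :
    Matrix.toEuclideanLin (c • A) v = c • Matrix.toEuclideanLin A v := by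
  rw [_root_.map_smul]; rfl

lemma taylor_bound (E : EVec d → ℝ) (hess : EVec d → Matrix (Fin d) (Fin d) ℝ)
    (xstar : EVec d) (δ M : ℝ)
    (hderiv : ∀ y, HasFDerivAt (gradient E)
      (LinearMap.toContinuousLinearMap (Matrix.toEuclideanLin (hess y))) y)
    (hgrad0 : gradient E xstar = 0)
    (hLip : ∀ x y : EVec d, ‖x - xstar‖ < δ → ‖y - xstar‖ < δ →
      specNorm (hess x - hess y) ≤ M * ‖x - y‖)
    (y : EVec d) (hy : ‖y - xstar‖ < δ) :
    ‖gradient E y - Matrix.toEuclideanLin (hess y) (y - xstar)‖ ≤ M / 2 * ‖y - xstar‖ ^ 2 := by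
  set e := y - xstar with he
  set φ : ℝ → EVec d :=
    fun t => gradient E (xstar + t • e) - t • Matrix.toEuclideanLin (hess y) e with hφdef
  have hφ : ∀ t : ℝ, HasDerivAt φ
      (Matrix.toEuclideanLin (hess (xstar + t • e)) e - Matrix.toEuclideanLin (hess y) e) t := by
    intro t
    have hcurve : HasDerivAt (fun s : ℝ => xstar + s • e) e t := by
      simpa using ((hasDerivAt_id t).smul_const e).const_add xstar
    have h1 : HasDerivAt (fun s : ℝ => gradient E (xstar + s • e))
        (Matrix.toEuclideanLin (hess (xstar + t • e)) e) t := by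
      have := (hderiv (xstar + t • e)).comp_hasDerivAt t hcurve
      simpa [Function.comp_def] using this
    have h2 : HasDerivAt (fun s : ℝ => s • (Matrix.toEuclideanLin (hess y) e))
        (Matrix.toEuclideanLin (hess y) e) t := by
      simpa using (hasDerivAt_id t).smul_const (Matrix.toEuclideanLin (hess y) e)
    exact h1.sub h2
  have hcont : ContinuousOn (fun t => φ t - φ 0) (Set.Icc 0 1) :=
    fun t _ => (((hφ t).continuousAt).sub continuousAt_const).continuousWithinAt
  have hB : ∀ t : ℝ, HasDerivAt (fun s => M * ‖e‖ ^ 2 * (s - s ^ 2 / 2))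
      (M * ‖e‖ ^ 2 * (1 - t)) t := by
    intro t
    have h1 : HasDerivAt (fun s : ℝ => s - s ^ 2 / 2) (1 - t) t := by
      have h12 : (1:ℝ) - t = 1 - ((2:ℕ):ℝ) * t ^ (2 - 1) / 2 := by norm_num
      rw [h12]
      exact (hasDerivAt_id' t).sub ((hasDerivAt_pow 2 t).div_const 2)
    simpa using h1.const_mul (M * ‖e‖ ^ 2)
  have bound : ∀ t ∈ Set.Ico (0:ℝ) 1,
      ‖Matrix.toEuclideanLin (hess (xstar + t • e)) e - Matrix.toEuclideanLin (hess y) e‖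
        ≤ M * ‖e‖ ^ 2 * (1 - t) := by
    intro t ht
    rw [← toEL_subM]
    have h1 : ‖Matrix.toEuclideanLin (hess (xstar + t • e) - hess y) e‖
        ≤ specNorm (hess (xstar + t • e) - hess y) * ‖e‖ := toEL_le _ _
    have hz : ‖(xstar + t • e) - xstar‖ < δ := by
      rw [add_sub_cancel_left, norm_smul]
      calc |t| * ‖e‖ ≤ 1 * ‖e‖ := by
            apply mul_le_mul_of_nonneg_right _ (norm_nonneg e)
            rw [abs_of_nonneg ht.1]; exact ht.2.le
        _ < δ := by rw [one_mul]; exact hy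
    have h2 : specNorm (hess (xstar + t • e) - hess y) ≤ M * ‖(xstar + t • e) - y‖ :=
      hLip _ _ hz hy
    have h3 : ‖(xstar + t • e) - y‖ = (1 - t) * ‖e‖ := by
      have : (xstar + t • e) - y = (t - 1) • e := by
        rw [he]; rw [sub_smul, one_smul]; abel
      rw [this, norm_smul, Real.norm_eq_abs, abs_of_nonpos (by linarith [ht.2.le]), neg_sub]
    calc ‖Matrix.toEuclideanLin (hess (xstar + t • e) - hess y) e‖
        ≤ specNorm (hess (xstar + t • e) - hess y) * ‖e‖ := h1
      _ ≤ (M * ((1 - t) * ‖e‖)) * ‖e‖ := by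
          apply mul_le_mul_of_nonneg_right _ (norm_nonneg e)
          rw [← h3]; exact h2
      _ = M * ‖e‖ ^ 2 * (1 - t) := by ring
  have key := image_norm_le_of_norm_deriv_right_le_deriv_boundary
    (f := fun t => φ t - φ 0)
    (f' := fun t => Matrix.toEuclideanLin (hess (xstar + t • e)) e
      - Matrix.toEuclideanLin (hess y) e)
    (a := 0) (b := 1) hcont
    (fun t _ => ((hφ t).sub_const (φ 0)).hasDerivWithinAt)
    (B := fun s => M * ‖e‖ ^ 2 * (s - s ^ 2 / 2)) (B' := fun t => M * ‖e‖ ^ 2 * (1 - t))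
    (by simp) hB bound (Set.right_mem_Icc.2 zero_le_one)
  have hφ1 : φ 1 = gradient E y - Matrix.toEuclideanLin (hess y) e := by
    rw [hφdef]
    simp only [one_smul]
    rw [he]
    congr 2
    abel
  have hφ0 : φ 0 = 0 := by
    rw [hφdef]; simp [hgrad0]
  have key2 : ‖φ 1 - φ 0‖ ≤ M * ‖e‖ ^ 2 * ((1:ℝ) - 1 ^ 2 / 2) := key
  rw [hφ1, hφ0, sub_zero] at key2
  calc ‖gradient E y - Matrix.toEuclideanLin (hess y) e‖
      ≤ M * ‖e‖ ^ 2 * ((1:ℝ) - 1 ^ 2 / 2) := key2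
    _ = M / 2 * ‖e‖ ^ 2 := by ring

end taylor

section step
variable {d k : ℕ}

lemma step_bound (hd : 1 ≤ d) (hkd : k ≤ d)
    (H : Matrix (Fin d) (Fin d) ℝ) (hsymm : H.IsSymm)
    (u : Fin d → EVec d) (hu : ∀ i j, (inner ℝ (u i) (u j) : ℝ) = if i = j then 1 else 0)
    (lamu : Fin d → ℝ)
    (hHu : ∀ i, mulVecE H (u i) = lamu i • u i)
    (hneg : ∀ i : Fin d, (i : ℕ) < k → lamu i < 0)
    (hpos : ∀ i : Fin d, k ≤ (i : ℕ) → 0 < lamu i)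
    {μ L : ℝ} (hbnd : ∀ i, μ ≤ |lamu i| ∧ |lamu i| ≤ L)
    (V Vh : Matrix (Fin d) (Fin k) ℝ) (lam : Fin k → ℝ)
    (hV : Vᵀ * V = 1) (hlam : ∀ j, lam j < 0)
    (hHV : H * V = V * Matrix.diagonal lam)
    (α β M : ℝ) (hspec : specNorm (V * Vᵀ - Vh * Vhᵀ) ≤ α)
    (hα0 : 0 ≤ α) (hβ : 0 < β) (hμ : 0 < μ) (hL : 0 ≤ L)
    (hβL : 1 ≤ β * L) (hβ2 : 2 ≤ β * (L + μ)) (hM : 0 ≤ M)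
    (g e : EVec d) (htay : ‖g - mulVecE H e‖ ≤ M / 2 * ‖e‖ ^ 2) :
    ‖e - β • mulVecE (1 - (2:ℝ) • (Vh * Vhᵀ)) g‖
      ≤ (β * L - 1 + 2 * α * β * L) * ‖e‖ + β * (1 + 2 * α) * (M / 2) * ‖e‖ ^ 2 := by
  classical
  haveI : Nonempty (Fin d) := ⟨⟨0, hd⟩⟩
  have hon : Orthonormal ℝ u := orthonormal_iff_ite.2 hu
  have hcard : Fintype.card (Fin d) = Module.finrank ℝ (EVec d) := by
    simp [finrank_euclideanSpace_fin]
  set bb := basisOfOrthonormalOfCardEqFinrank hon hcard with hbbdef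
  have hbb : ⇑bb = u := coe_basisOfOrthonormalOfCardEqFinrank hon hcard
  set b : OrthonormalBasis (Fin d) ℝ (EVec d) :=
    OrthonormalBasis.mk hon (by rw [← hbb, bb.span_eq]) with hbdef
  have hb : ⇑b = u := OrthonormalBasis.coe_mk _ _
  set P := V * Vᵀ with hPdef
  set Ph := Vh * Vhᵀ with hPhdef
  have hP : ∀ i : Fin d, Matrix.toEuclideanLin P (u i) = if (i : ℕ) < k then u i else 0 :=
    proj_eig hkd H hsymm u b hb lamu (fun i => hHu i) hpos V hV lam hlam hHV
  -- the contraction matrix T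
  set T := (1 : Matrix (Fin d) (Fin d) ℝ) - β • ((1 - (2:ℝ) • P) * H) with hT
  have hTu : ∀ i, Matrix.toEuclideanLin T (u i) = (1 - β * |lamu i|) • u i := by
    intro i
    rw [hT, toEL_subM, toEL_one, toEL_smulM, toEL_mul]
    have hHui : Matrix.toEuclideanLin H (u i) = lamu i • u i := hHu i
    rw [hHui, _root_.map_smul, toEL_subM, toEL_one, toEL_smulM, hP i]
    by_cases hik : (i : ℕ) < k
    · rw [if_pos hik, abs_of_neg (hneg i hik)]
      module
    · rw [if_neg hik, abs_of_pos (hpos i (le_of_not_gt hik))]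
      module
  have hTb : ∀ w : EVec d, ‖Matrix.toEuclideanLin T w‖ ≤ (β * L - 1) * ‖w‖ := by
    intro w
    refine opbound T b (fun i => 1 - β * |lamu i|) (fun i => by rw [hb]; exact hTu i)
      (by linarith) (fun i => ?_) w
    show abs (1 - β * abs (lamu i)) ≤ β * L - 1
    have h1 : β * |lamu i| ≤ β * L := mul_le_mul_of_nonneg_left (hbnd i).2 hβ.le
    have h2 : β * μ ≤ β * |lamu i| := mul_le_mul_of_nonneg_left (hbnd i).1 hβ.le
    have h3 : β * (L + μ) = β * L + β * μ := mul_add _ _ _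
    exact abs_le.2 ⟨by linarith, by linarith⟩
  -- reflection is an isometry
  have hPsymm : Pᵀ = P := by rw [hPdef]; simp [Matrix.transpose_mul]
  have hPP : P * P = P := by
    rw [hPdef, Matrix.mul_assoc, ← Matrix.mul_assoc Vᵀ, hV, Matrix.one_mul]
  have hrefl : ∀ w : EVec d, ‖Matrix.toEuclideanLin (1 - (2:ℝ) • P) w‖ = ‖w‖ := by
    intro w
    refine norm_toEL_orth _ ?_ w
    have ht : (1 - (2:ℝ) • P)ᵀ = 1 - (2:ℝ) • P := by
      simp [Matrix.transpose_sub, Matrix.transpose_smul, hPsymm]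
    rw [ht]
    have h2P : (2:ℝ) • P = P + P := two_smul ℝ P
    rw [h2P]
    have expand : ((1 : Matrix (Fin d) (Fin d) ℝ) - (P + P)) * (1 - (P + P))
        = 1 - (P + P) - (P + P) + (P * P + P * P + P * P + P * P) := by noncomm_ring
    rw [expand, hPP]
    abel
  -- ‖He‖ ≤ L‖e‖
  have hHe : ‖mulVecE H e‖ ≤ L * ‖e‖ := by
    exact opbound H b lamu (fun i => by rw [hb]; exact hHu i) hL (fun i => (hbnd i).2) e
  -- decomposition
  have hdecomp : e - β • mulVecE (1 - (2:ℝ) • Ph) g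
      = Matrix.toEuclideanLin T e
        - β • Matrix.toEuclideanLin (1 - (2:ℝ) • P) (g - mulVecE H e)
        - (2 * β) • Matrix.toEuclideanLin (P - Ph) g := by
    simp only [mulVecE, hT, _root_.map_sub, _root_.map_smul, LinearMap.sub_apply, LinearMap.smul_apply, toEL_mul, toEL_one]
    module
  rw [hdecomp]
  have n1 : ‖Matrix.toEuclideanLin T e‖ ≤ (β * L - 1) * ‖e‖ := hTb e
  have n2 : ‖β • Matrix.toEuclideanLin (1 - (2:ℝ) • P) (g - mulVecE H e)‖
      ≤ β * (M / 2 * ‖e‖ ^ 2) := by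
    rw [norm_smul, Real.norm_eq_abs, abs_of_pos hβ, hrefl]
    exact mul_le_mul_of_nonneg_left htay hβ.le
  have ng : ‖g‖ ≤ L * ‖e‖ + M / 2 * ‖e‖ ^ 2 := by
    calc ‖g‖ = ‖mulVecE H e + (g - mulVecE H e)‖ := by congr 1; abel
      _ ≤ ‖mulVecE H e‖ + ‖g - mulVecE H e‖ := norm_add_le _ _
      _ ≤ L * ‖e‖ + M / 2 * ‖e‖ ^ 2 := add_le_add hHe htay
  have n3 : ‖(2 * β) • Matrix.toEuclideanLin (P - Ph) g‖
      ≤ 2 * β * (α * (L * ‖e‖ + M / 2 * ‖e‖ ^ 2)) := by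
    rw [norm_smul, Real.norm_eq_abs, abs_of_pos (by linarith : (0:ℝ) < 2 * β)]
    apply mul_le_mul_of_nonneg_left _ (by linarith)
    calc ‖Matrix.toEuclideanLin (P - Ph) g‖ ≤ specNorm (P - Ph) * ‖g‖ := toEL_le _ _
      _ ≤ α * (L * ‖e‖ + M / 2 * ‖e‖ ^ 2) := by
          apply mul_le_mul hspec ng (norm_nonneg g) hα0
  calc ‖Matrix.toEuclideanLin T e
        - β • Matrix.toEuclideanLin (1 - (2:ℝ) • P) (g - mulVecE H e)
        - (2 * β) • Matrix.toEuclideanLin (P - Ph) g‖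
      ≤ ‖Matrix.toEuclideanLin T e
        - β • Matrix.toEuclideanLin (1 - (2:ℝ) • P) (g - mulVecE H e)‖
        + ‖(2 * β) • Matrix.toEuclideanLin (P - Ph) g‖ := norm_sub_le _ _
    _ ≤ ‖Matrix.toEuclideanLin T e‖
        + ‖β • Matrix.toEuclideanLin (1 - (2:ℝ) • P) (g - mulVecE H e)‖
        + ‖(2 * β) • Matrix.toEuclideanLin (P - Ph) g‖ := by
          have := norm_sub_le (Matrix.toEuclideanLin T e)
            (β • Matrix.toEuclideanLin (1 - (2:ℝ) • P) (g - mulVecE H e))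
          linarith
    _ ≤ (β * L - 1) * ‖e‖ + β * (M / 2 * ‖e‖ ^ 2)
        + 2 * β * (α * (L * ‖e‖ + M / 2 * ‖e‖ ^ 2)) := by linarith [n1, n2, n3]
    _ = (β * L - 1 + 2 * α * β * L) * ‖e‖ + β * (1 + 2 * α) * (M / 2) * ‖e‖ ^ 2 := by ring

end step

section bridge

lemma claim1 (κ α η : ℝ) (hκ : 1 ≤ κ) (hα0 : 0 ≤ α) (hα1 : α ≤ 1)
    (hη : η = 1-α-κ*α*(α+5)) (hηpos : 0 < η) :
    α * (κ*(4+5*α)-η)^2 ≤ 2*(1+2*α)*(κ*(1+2*α)+(η+3*κ*α))*(3*κ-2*η) := by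
  subst hη
  nlinarith [sq_nonneg α, sq_nonneg (κ*α), mul_nonneg hα0 (sub_nonneg.2 hα1), sq_nonneg (κ-1), mul_nonneg (sub_nonneg.2 hκ) hα0, mul_nonneg (mul_nonneg hα0 hα0) (sub_nonneg.2 hκ), sq_nonneg (κ*α-1), mul_pos (lt_of_lt_of_le one_pos hκ) (lt_of_lt_of_le one_pos hκ)]

lemma corePoly (κ α t η D : ℝ) (hκ : 1 ≤ κ) (hα0 : 0 ≤ α) (hα1 : α ≤ 1)
    (ht0 : 0 ≤ t) (ht1 : t ≤ 1) (hη : η = 1-α-κ*α*(α+5)) (hηpos : 0 < η)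
    (hD : D = κ*(1-α^2)+1-α) :
    (2*κ*(1+2*α) - D + 2*(1+2*α)*η*t) * (D + 2*η*(1-t)) ≤ D^2 := by
  set S := κ*(1+2*α) with hS
  set G := 1+2*α with hG
  set X := η + 3*κ*α with hX
  have hDSX : D = S + X := by rw [hD, hS, hX, hη]; ring
  set B := η*(2*α*S+(2+2*α)*X) with hB
  set Δ := (S+X)*α*(3*κ-2*η) with hΔ
  have hΔ0 : 0 ≤ Δ := by
    have : 0 ≤ S + X := by nlinarith [hηpos.le]
    have : 0 ≤ 3*κ-2*η := by nlinarith
    positivity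
  -- goal equivalent to Q(t) := A - B t - 2 G η² t(1-t) ≥ 0 with A = B + Δ
  have key : 0 ≤ (B + Δ) - B*t - 2*G*η^2*(t*(1-t)) := by
    have hGnn : (0:ℝ) ≤ G := by rw [hG]; linarith
    rcases le_or_gt (2*G*η^2) B with hcase | hcase
    · -- Q decreasing on [0,1], Q(1) = Δ ≥ 0
      nlinarith [mul_nonneg (sub_nonneg.2 ht1) (sub_nonneg.2 hcase), mul_nonneg (mul_nonneg hGnn (sq_nonneg η)) (sq_nonneg (1-t))]
    · -- vertex case: 8Gη²Q = (4Gη²t - (B+2Gη²))² + 8Gη²Δ - (B-2Gη²)²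
      have hBG : B - 2*G*η^2 = 2*α*η*(S - η + 3*κ + 3*κ*α) := by
        rw [hB, hG, hX]; ring
      have hgap : (B - 2*G*η^2)^2 ≤ 8*G*η^2*Δ := by
        have h1 := claim1 κ α η hκ hα0 hα1 hη hηpos
        have hW : S - η + 3*κ + 3*κ*α = κ*(4+5*α) - η := by rw [hS]; ring
        rw [hBG, hW]
        have := mul_le_mul_of_nonneg_left h1 hα0
        have hη2 : 0 ≤ η^2 := sq_nonneg η
        calc (2*α*η*(κ*(4+5*α) - η))^2 = 4*η^2*(α*(α * (κ*(4+5*α)-η)^2)) := by ring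
          _ ≤ 4*η^2*(α*(2*(1+2*α)*(κ*(1+2*α)+(η+3*κ*α))*(3*κ-2*η))) := by
              apply mul_le_mul_of_nonneg_left _ (by positivity)
              exact mul_le_mul_of_nonneg_left h1 hα0
          _ = 8*G*η^2*Δ := by rw [hG, hΔ, hS, hX]; ring
      have hGpos : (0:ℝ) < 8*G*η^2 := by positivity
      have expand : 8*G*η^2*((B + Δ) - B*t - 2*G*η^2*(t*(1-t)))
          = (4*G*η^2*t - (B+2*G*η^2))^2 + (8*G*η^2*Δ - (B-2*G*η^2)^2) := by ring
      nlinarith [sq_nonneg (4*G*η^2*t - (B+2*G*η^2))]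
  have hexp : D^2 - (2*κ*G - D + 2*G*η*t) * (D + 2*η*(1-t))
      = 2*((B + Δ) - B*t - 2*G*η^2*(t*(1-t))) := by
    rw [hDSX, hB, hΔ, hG, hX, hS, hη]; ring
  linarith [key]


lemma bridge_ineq (μ L M α κ η rhat β γ D : ℝ)
    (hμ : 0 < μ) (hL : μ < L) (hM : 0 < M) (hα0 : 0 ≤ α) (hα1 : α ≤ 1)
    (hκ : κ = L / μ) (hη : η = 1 - α - κ * α * (α + 5)) (hηpos : 0 < η)
    (hD : D = κ * (1 - α ^ 2) + 1 - α) (hDpos : 0 < D)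
    (hrhat : rhat = 2 * μ * η / M) (hβ : β = 2 / (L * (1 - α ^ 2) + μ * (1 - α)))
    (hγ : γ = 1 - 2 * η / (D + 2 * η))
    (ρ : ℝ) (hρ0 : 0 ≤ ρ) (hρr : ρ ≤ rhat) :
    (β * L - 1 + 2 * α * β * L + β * (1 + 2 * α) * (M / 2) * ρ) * (rhat - (1 - γ) * ρ)
      ≤ γ * rhat := by
  have hrhatpos : 0 < rhat := by rw [hrhat]; positivity
  have hκ1 : 1 ≤ κ := by rw [hκ]; rw [le_div_iff₀ hμ]; linarith
  have hLκ : L = κ * μ := by rw [hκ, div_mul_cancel₀ _ hμ.ne']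
  have hμD : μ * D = L * (1 - α ^ 2) + μ * (1 - α) := by
    rw [hD, hLκ]; ring
  have hDenpos : 0 < L * (1 - α ^ 2) + μ * (1 - α) := by rw [← hμD]; positivity
  set t := ρ / rhat with ht
  have ht0 : 0 ≤ t := div_nonneg hρ0 hrhatpos.le
  have ht1 : t ≤ 1 := by rw [ht, div_le_one hrhatpos]; exact hρr
  have hρt : ρ = t * rhat := by rw [ht]; field_simp
  have key := corePoly κ α t η D hκ1 hα0 hα1 ht0 ht1 hη hηpos hD
  have hβ' : β = 2 / (μ * D) := by rw [hβ, hμD]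
  have e1 : β * L - 1 + 2 * α * β * L + β * (1 + 2 * α) * (M / 2) * ρ
      = (2 * κ * (1 + 2 * α) - D + 2 * (1 + 2 * α) * η * t) / D := by
    rw [hρt, hrhat, hβ', hLκ]
    field_simp
    ring
  have e2 : rhat - (1 - γ) * ρ = rhat * (D + 2 * η * (1 - t)) / (D + 2 * η) := by
    rw [hρt, hγ]
    field_simp
    ring
  have e3 : γ * rhat = D * rhat / (D + 2 * η) := by
    rw [hγ]
    field_simp
    ring
  rw [e1, e2, e3, div_mul_div_comm, div_le_div_iff₀ (by positivity) (by positivity)]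
  have hmul := mul_le_mul_of_nonneg_right key (by positivity : (0:ℝ) ≤ rhat * (D + 2 * η))
  nlinarith [hmul]

end bridge

set_option maxHeartbeats 2000000 in
/-- Theorem 5.4 (convergence, approximate eigenvectors, index k): under Assumption (A)
with index `k`, `κ = L/μ`, `α ∈ [0,1]` with `1 - α > κα(α+5)`, `η = 1 - α - κα(α+5)`,
`r̂ = 2μη/M`, `β = 2/(L(1-α²) + μ(1-α))`, if in each step the iteration uses the first
`k` columns `V̂_k⁽ⁿ⁾` of an orthogonal matrix with
`‖V_k⁽ⁿ⁾ (V_k⁽ⁿ⁾)ᵀ - V̂_k⁽ⁿ⁾ (V̂_k⁽ⁿ⁾)ᵀ‖₂ ≤ α`, where the columns of `V_k⁽ⁿ⁾` are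
orthonormal eigenvectors of `∇²E(x⁽ⁿ⁾)` for its `k` smallest eigenvalues, and
`r₀ = ‖x⁽⁰⁾ - x*‖₂ < min {δ, r̂}`, then
`‖x⁽ⁿ⁾ - x*‖₂ ≤ (1 - 2η/(κ(1-α²) + 1 - α + 2η))ⁿ r̂ r₀ / (r̂ - r₀)` and `x⁽ⁿ⁾ → x*`. -/
theorem indexk_inexact_convergence {d k : ℕ} (hk : 1 ≤ k) (hkd : k ≤ d)
    (E : EVec d → ℝ)
    (hess : EVec d → Matrix (Fin d) (Fin d) ℝ)
    (xstar : EVec d) (δ M μ L : ℝ)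
    (hA : AssumptionA k E hess xstar δ M μ L)
    (κ : ℝ) (hκ : κ = L / μ)
    (α : ℝ) (hα0 : 0 ≤ α) (hα1 : α ≤ 1)
    (hαsmall : 1 - α > κ * α * (α + 5))
    (η rhat β : ℝ) (hη : η = 1 - α - κ * α * (α + 5))
    (hrhat : rhat = 2 * μ * η / M) (hβ : β = 2 / (L * (1 - α ^ 2) + μ * (1 - α)))
    (x : ℕ → EVec d)
    (hstep : ∀ n : ℕ, ∃ (Vk Vhatk : Matrix (Fin d) (Fin k) ℝ) (lam : Fin k → ℝ),
      Vkᵀ * Vk = 1 ∧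
      Monotone lam ∧ (∀ i, lam i < 0) ∧
      hess (x n) * Vk = Vk * Matrix.diagonal lam ∧
      (∃ Vhatmk : Matrix (Fin d) (Fin (d - k)) ℝ,
        Matrix.fromCols Vhatk Vhatmk * (Matrix.fromCols Vhatk Vhatmk)ᵀ = 1) ∧
      specNorm (Vk * Vkᵀ - Vhatk * Vhatkᵀ) ≤ α ∧
      x (n + 1) = x n - β • mulVecE (1 - (2 : ℝ) • (Vhatk * Vhatkᵀ)) (gradient E (x n)))
    (h0 : ‖x 0 - xstar‖ < min δ rhat) :
    (∀ n : ℕ, ‖x n - xstar‖ ≤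
      (1 - 2 * η / (κ * (1 - α ^ 2) + 1 - α + 2 * η)) ^ n *
        (rhat * ‖x 0 - xstar‖ / (rhat - ‖x 0 - xstar‖))) ∧
    Tendsto x atTop (nhds xstar) := by
  obtain ⟨hC2, hderiv, hsymmH, hgrad0, hδpos, hMpos, hμpos, hμL, hLip, heig⟩ := hA
  have hd1 : 1 ≤ d := le_trans hk hkd
  have hLpos : 0 < L := lt_trans hμpos hμL
  have hκpos : 0 < κ := by rw [hκ]; positivity
  have hα1' : α < 1 := by
    nlinarith [hαsmall, mul_nonneg (mul_nonneg hκpos.le hα0) (by linarith : (0:ℝ) ≤ α + 5)]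
  have hηpos : 0 < η := by rw [hη]; linarith [hαsmall]
  have hDenpos : 0 < L * (1 - α ^ 2) + μ * (1 - α) := by
    nlinarith [mul_pos hμpos (by linarith : (0:ℝ) < 1 - α),
      mul_nonneg hLpos.le (by nlinarith : (0:ℝ) ≤ 1 - α ^ 2)]
  have hβpos : 0 < β := by rw [hβ]; positivity
  have hβL : 1 ≤ β * L := by
    rw [hβ, div_mul_eq_mul_div, le_div_iff₀ hDenpos]; nlinarith
  have hβ2 : 2 ≤ β * (L + μ) := by
    rw [hβ, div_mul_eq_mul_div, le_div_iff₀ hDenpos]; nlinarith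
  have hrhatpos : 0 < rhat := by rw [hrhat]; positivity
  set D : ℝ := κ * (1 - α ^ 2) + 1 - α with hD
  have hDpos : 0 < D := by
    rw [hD]; nlinarith [mul_nonneg hκpos.le (by nlinarith : (0:ℝ) ≤ 1 - α ^ 2)]
  set γ : ℝ := 1 - 2 * η / (D + 2 * η) with hγdef
  have hD2η : 0 < D + 2 * η := by linarith
  have hγ1 : γ < 1 := by
    rw [hγdef]
    have : 0 < 2 * η / (D + 2 * η) := div_pos (by linarith) hD2η
    linarith
  have hγ0 : 0 < γ := by
    rw [hγdef]
    have : 2 * η / (D + 2 * η) < 1 := (div_lt_one hD2η).2 (by linarith)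
    linarith
  set r0 : ℝ := ‖x 0 - xstar‖ with hr0
  have hr00 : 0 ≤ r0 := norm_nonneg _
  have hr0δ : r0 < δ := lt_of_lt_of_le h0 (min_le_left _ _)
  have hr0r : r0 < rhat := lt_of_lt_of_le h0 (min_le_right _ _)
  have hstepest : ∀ n, ‖x n - xstar‖ < δ →
      ‖x (n+1) - xstar‖ ≤ (β * L - 1 + 2 * α * β * L) * ‖x n - xstar‖
        + β * (1 + 2 * α) * (M / 2) * ‖x n - xstar‖ ^ 2 := by
    intro n hn
    obtain ⟨Vk, Vhatk, lam, hVk, _, hlamneg, hHVk, _, hspec, hupd⟩ := hstep n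
    obtain ⟨u, lamu, hu, hHu, _, hneg, hposk, hbnd⟩ := heig (x n) hn
    have htay := taylor_bound E hess xstar δ M hderiv hgrad0 hLip (x n) hn
    have hsb := step_bound hd1 hkd (hess (x n)) (hsymmH (x n)) u hu lamu hHu hneg hposk hbnd
      Vk Vhatk lam hVk hlamneg hHVk α β M hspec hα0 hβpos hμpos hLpos.le hβL hβ2 hMpos.le
      (gradient E (x n)) (x n - xstar) htay
    have hxe : x (n+1) - xstar
        = (x n - xstar) - β • mulVecE (1 - (2:ℝ) • (Vhatk * Vhatkᵀ)) (gradient E (x n)) := by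
      rw [hupd, sub_right_comm]
    rw [hxe]; exact hsb
  have hwpos : ∀ n : ℕ, 0 < rhat - (1 - γ ^ n) * r0 := by
    intro n
    have h1 : γ ^ n ≤ 1 := pow_le_one₀ hγ0.le hγ1.le
    have h2 : 0 ≤ γ ^ n := pow_nonneg hγ0.le n
    nlinarith
  have hρle : ∀ n : ℕ, γ ^ n * rhat * r0 / (rhat - (1 - γ ^ n) * r0) ≤ r0 := by
    intro n
    rw [div_le_iff₀ (hwpos n)]
    have h1 : γ ^ n ≤ 1 := pow_le_one₀ hγ0.le hγ1.le
    nlinarith [mul_nonneg hr00 (mul_nonneg (sub_nonneg.2 h1) (sub_nonneg.2 hr0r.le))]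
  have hρnn : ∀ n : ℕ, 0 ≤ γ ^ n * rhat * r0 / (rhat - (1 - γ ^ n) * r0) := by
    intro n
    apply div_nonneg _ (hwpos n).le
    positivity
  have main : ∀ n, ‖x n - xstar‖ ≤ γ ^ n * rhat * r0 / (rhat - (1 - γ ^ n) * r0) := by
    intro n
    induction n with
    | zero =>
      have he : γ ^ 0 * rhat * r0 / (rhat - (1 - γ ^ 0) * r0) = r0 := by
        rw [pow_zero]
        field_simp
        rw [sub_self, mul_zero, sub_zero, mul_div_cancel_left₀ r0 hrhatpos.ne']
      rw [he]
    | succ n ih =>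
      set ρ := γ ^ n * rhat * r0 / (rhat - (1 - γ ^ n) * r0) with hρ
      have hρr0 : ρ ≤ r0 := hρle n
      have hρn0 : 0 ≤ ρ := hρnn n
      have hrly : ‖x n - xstar‖ < δ := lt_of_le_of_lt (ih.trans hρr0) hr0δ
      have h1 := hstepest n hrly
      have hmono : (β * L - 1 + 2 * α * β * L) * ‖x n - xstar‖
            + β * (1 + 2 * α) * (M / 2) * ‖x n - xstar‖ ^ 2
          ≤ (β * L - 1 + 2 * α * β * L) * ρ + β * (1 + 2 * α) * (M / 2) * ρ ^ 2 := by
        have hA10 : 0 ≤ β * L - 1 + 2 * α * β * L := by nlinarith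
        have hC0 : 0 ≤ β * (1 + 2 * α) * (M / 2) := by positivity
        have hsq : ‖x n - xstar‖ ^ 2 ≤ ρ ^ 2 := pow_le_pow_left₀ (norm_nonneg _) ih 2
        exact add_le_add (mul_le_mul_of_nonneg_left ih hA10)
          (mul_le_mul_of_nonneg_left hsq hC0)
      have hbr := bridge_ineq μ L M α κ η rhat β γ D hμpos hμL hMpos hα0 hα1'.le hκ hη
        hηpos hD hDpos hrhat hβ hγdef ρ hρn0 (hρr0.trans hr0r.le)
      have hden : 0 < rhat - (1 - γ) * ρ := by
        nlinarith [mul_nonneg hγ0.le hρn0]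
      have h2 : β * L - 1 + 2 * α * β * L + β * (1 + 2 * α) * (M / 2) * ρ
          ≤ γ * rhat / (rhat - (1 - γ) * ρ) := (le_div_iff₀ hden).2 hbr
      have h4 : (β * L - 1 + 2 * α * β * L + β * (1 + 2 * α) * (M / 2) * ρ) * ρ
          ≤ (γ * rhat / (rhat - (1 - γ) * ρ)) * ρ := mul_le_mul_of_nonneg_right h2 hρn0
      have hident : (γ * rhat / (rhat - (1 - γ) * ρ)) * ρ
          = γ ^ (n+1) * rhat * r0 / (rhat - (1 - γ ^ (n+1)) * r0) := by
        have hw := (hwpos n).ne'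
        have hw1 := (hwpos (n+1)).ne'
        have e1 : rhat - (1 - γ) * ρ
            = rhat * (rhat - (1 - γ ^ (n+1)) * r0) / (rhat - (1 - γ ^ n) * r0) := by
          have hρW : ρ * (rhat - (1 - γ ^ n) * r0) = γ ^ n * rhat * r0 := by
            rw [hρ]; exact div_mul_cancel₀ _ hw
          rw [eq_div_iff hw]
          linear_combination (-(1 - γ)) * hρW
        rw [e1, hρ, div_div_eq_mul_div, div_mul_div_comm, eq_div_iff hw1, div_mul_eq_mul_div,
          div_eq_iff (mul_ne_zero (mul_ne_zero hrhatpos.ne' hw1) hw)]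
        ring
      calc ‖x (n+1) - xstar‖
          ≤ (β * L - 1 + 2 * α * β * L) * ‖x n - xstar‖
            + β * (1 + 2 * α) * (M / 2) * ‖x n - xstar‖ ^ 2 := h1
        _ ≤ (β * L - 1 + 2 * α * β * L) * ρ + β * (1 + 2 * α) * (M / 2) * ρ ^ 2 := hmono
        _ = (β * L - 1 + 2 * α * β * L + β * (1 + 2 * α) * (M / 2) * ρ) * ρ := by ring
        _ ≤ (γ * rhat / (rhat - (1 - γ) * ρ)) * ρ := h4
        _ = γ ^ (n+1) * rhat * r0 / (rhat - (1 - γ ^ (n+1)) * r0) := hident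
  have final : ∀ n, ‖x n - xstar‖ ≤ γ ^ n * (rhat * r0 / (rhat - r0)) := by
    intro n
    refine (main n).trans ?_
    have h1 : γ ^ n ≤ 1 := pow_le_one₀ hγ0.le hγ1.le
    have hle : rhat - r0 ≤ rhat - (1 - γ ^ n) * r0 := by nlinarith [pow_nonneg hγ0.le n]
    have hpos : 0 < rhat - r0 := by linarith
    calc γ ^ n * rhat * r0 / (rhat - (1 - γ ^ n) * r0)
        ≤ γ ^ n * rhat * r0 / (rhat - r0) := by
          apply div_le_div_of_nonneg_left _ hpos hle
          positivity
      _ = γ ^ n * (rhat * r0 / (rhat - r0)) := by ring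
  refine ⟨final, ?_⟩
  have h1 : Tendsto (fun n : ℕ => γ ^ n * (rhat * r0 / (rhat - r0))) atTop (nhds 0) := by
    have := (tendsto_pow_atTop_nhds_zero_of_lt_one hγ0.le hγ1).mul_const
      (rhat * r0 / (rhat - r0))
    simpa using this
  have h2 : Tendsto (fun n => ‖x n - xstar‖) atTop (nhds 0) :=
    squeeze_zero (fun n => norm_nonneg _) final h1
  exact tendsto_iff_norm_sub_tendsto_zero.2 h2
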